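/- Let μ_D = (1/n) Σᵢ x₀⁽ⁱ⁾ be the mean of a finite dataset D ⊂ ℝᵈ and F_α(x) the Gaussian-weighted denoiser average at noise level α. Then for every x ∈ ℝᵈ, ‖F_α(x) - μ_D‖ ≤ diam(D) · (1 - n·min_i p_i(α, x)) where p_i(α, x) are the normalized Gaussian weights and diam(D) is the diameter of D. -/

import Mathlib

open Finset

/-- Deviation of the denoiser from the data mean: with normalized Gaussian weights
`p_i(α,x)`, the denoiser output `F_α(x)` satisfies
`‖F_α(x) - μ_D‖ ≤ diam(D) · (1 - n · min_i p_i(α,x))`. -/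
theorem denoiser_deviation_from_mean
    (d n : ℕ) (hn : 0 < n) (x₀ : Fin n → EuclideanSpace ℝ (Fin d))
    (μD : EuclideanSpace ℝ (Fin d)) (hμD : μD = (n : ℝ)⁻¹ • ∑ i, x₀ i)
    (p : ℝ → EuclideanSpace ℝ (Fin d) → Fin n → ℝ)
    (hp : ∀ α x i, p α x i =
      Real.exp (-‖x - Real.sqrt α • x₀ i‖ ^ 2 / (2 * (1 - α))) /
        ∑ j, Real.exp (-‖x - Real.sqrt α • x₀ j‖ ^ 2 / (2 * (1 - α))))
    (F : ℝ → EuclideanSpace ℝ (Fin d) → EuclideanSpace ℝ (Fin d))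
    (hF : ∀ α x, F α x = ∑ i, p α x i • x₀ i) :
    ∀ α ∈ Set.Ioo (0 : ℝ) 1, ∀ x : EuclideanSpace ℝ (Fin d),
      ‖F α x - μD‖ ≤ Metric.diam (Set.range x₀) *
        (1 - n * (Finset.univ.inf' (Finset.univ_nonempty_iff.mpr
          ⟨⟨0, hn⟩⟩) (p α x))) := by
  intro α hα x
  set D := Metric.diam (Set.range x₀) with hD
  have hDnn : 0 ≤ D := Metric.diam_nonneg
  set q : Fin n → ℝ := p α x with hq
  have hden : 0 < ∑ j, Real.exp (-‖x - Real.sqrt α • x₀ j‖ ^ 2 / (2 * (1 - α))) :=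
    Finset.sum_pos (fun j _ => Real.exp_pos _) (Finset.univ_nonempty_iff.mpr ⟨⟨0, hn⟩⟩)
  have hsum : ∑ i, q i = 1 := by
    simp only [hq, hp, ← Finset.sum_div]
    exact div_self hden.ne'
  set m := Finset.univ.inf' (Finset.univ_nonempty_iff.mpr ⟨⟨0, hn⟩⟩) q with hm
  have hmle : ∀ i, m ≤ q i := fun i => Finset.inf'_le _ (mem_univ i)
  have hnpos : (0 : ℝ) < n := by exact_mod_cast hn
  -- sum of data points
  have hS : ∑ i, x₀ i = (n : ℝ) • μD := by
    rw [hμD, smul_smul, mul_inv_cancel₀ hnpos.ne', one_smul]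
  -- distance to mean is at most the diameter
  have hbdd : Bornology.IsBounded (Set.range x₀) := (Set.finite_range x₀).isBounded
  have hdd : ∀ i j, ‖x₀ i - x₀ j‖ ≤ D := fun i j => by
    rw [← dist_eq_norm]
    exact Metric.dist_le_diam_of_mem hbdd ⟨i, rfl⟩ ⟨j, rfl⟩
  have hdist : ∀ i, ‖x₀ i - μD‖ ≤ D := by
    intro i
    have h1 : x₀ i - μD = (n : ℝ)⁻¹ • ∑ j, (x₀ i - x₀ j) := by
      rw [Finset.sum_sub_distrib, Finset.sum_const, card_univ, Fintype.card_fin,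
        smul_sub, hμD, ← Nat.cast_smul_eq_nsmul ℝ, smul_smul, inv_mul_cancel₀ hnpos.ne', one_smul]
    rw [h1, norm_smul, Real.norm_eq_abs, abs_of_nonneg (by positivity)]
    calc (n : ℝ)⁻¹ * ‖∑ j, (x₀ i - x₀ j)‖
        ≤ (n : ℝ)⁻¹ * ∑ j, ‖x₀ i - x₀ j‖ := by
          gcongr; exact norm_sum_le _ _
      _ ≤ (n : ℝ)⁻¹ * ∑ _j : Fin n, D := by
          gcongr with j; exact hdd i j
      _ = D := by
          rw [Finset.sum_const, card_univ, Fintype.card_fin, nsmul_eq_mul]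
          field_simp
  -- key identity
  have hid : F α x - μD = ∑ i, (q i - m) • (x₀ i - μD) := by
    have : ∑ i, (q i - m) • (x₀ i - μD)
        = (∑ i, q i • x₀ i) - (∑ i, q i) • μD - m • (∑ i, x₀ i)
            + (n : ℝ) • (m • μD) := by
      simp only [sub_smul, smul_sub, Finset.sum_sub_distrib, Finset.sum_smul,
        Finset.smul_sum, Finset.sum_const, card_univ, Fintype.card_fin,
        ← Nat.cast_smul_eq_nsmul ℝ]
      abel
    rw [this, hsum, hS, hF, one_smul, smul_smul, smul_smul, mul_comm]
    abel
  rw [hid]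
  calc ‖∑ i, (q i - m) • (x₀ i - μD)‖
      ≤ ∑ i, ‖(q i - m) • (x₀ i - μD)‖ := norm_sum_le _ _
    _ = ∑ i, (q i - m) * ‖x₀ i - μD‖ := by
        refine Finset.sum_congr rfl fun i _ => ?_
        rw [norm_smul, Real.norm_eq_abs, abs_of_nonneg (sub_nonneg.2 (hmle i))]
    _ ≤ ∑ i, (q i - m) * D := by
        refine Finset.sum_le_sum fun i _ => ?_
        exact mul_le_mul_of_nonneg_left (hdist i) (sub_nonneg.2 (hmle i))
    _ = (1 - n * m) * D := by
        rw [← Finset.sum_mul, Finset.sum_sub_distrib, hsum, Finset.sum_const,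
          card_univ, Fintype.card_fin, nsmul_eq_mul]
    _ = D * (1 - n * m) := mul_comm _ _
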